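/- Let (F_n) be the Fibonacci sequence with F_1 = F_2 = 1, and Φ = (1+√5)/2 the golden ratio. Then for every integer n ≥ 1, Φ^(n²/4 - 9/4) ≤ lcm(F_1, F_2, ..., F_n) ≤ Φ^(n²/3 + 4n/3). -/

import Mathlib

open Finset
open Real

namespace Stmt19

/-- lcm of the first `n` Fibonacci numbers -/
def L (n : ℕ) : ℕ := (Finset.Icc 1 n).lcm Nat.fib

/-- product of `fib (m/p)` over primes `p ∣ m` -/
def G (m : ℕ) : ℕ := ∏ p ∈ m.primeFactors, Nat.fib (m / p)

def P (n : ℕ) : Finset ℕ := (Finset.Icc 1 n).filter Nat.Prime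

def Sg (n : ℕ) : ℕ := ∑ p ∈ P n, (n / p) * (n / p - 1)

def B (n : ℕ) : ℤ := (n : ℤ) * n - 3 * n - Sg n

def beta (m : ℕ) : ℕ :=
  if m % 6 = 0 then m / 3 + 2
  else if m % 2 = 0 then m / 2 + 1
  else if m % 3 = 0 then 2 * m / 3 + 1
  else m - 1

def C : ℕ → ℕ
  | 0 => 0
  | n + 1 => C n + beta (n + 1)

/- ### golden ratio and Fibonacci bounds -/

lemma gold_zpow_add (k : ℤ) : goldenRatio ^ (k + 2) = goldenRatio ^ (k + 1) + goldenRatio ^ k := by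
  have h0 : goldenRatio ≠ 0 := goldenRatio_ne_zero
  have h2 : goldenRatio ^ (k + 2) = goldenRatio ^ k * goldenRatio ^ (2:ℕ) := by
    rw [← zpow_natCast goldenRatio 2, ← zpow_add₀ h0]; ring_nf
  have h1 : goldenRatio ^ (k + 1) = goldenRatio ^ k * goldenRatio := by
    rw [← zpow_add_one₀ h0]
  rw [h2, h1, goldenRatio_sq]; ring

lemma fib_lb_aux : ∀ k : ℕ,
    goldenRatio ^ ((k : ℤ) - 1) ≤ (Nat.fib (k + 1) : ℝ) ∧
      goldenRatio ^ (k : ℤ) ≤ (Nat.fib (k + 2) : ℝ) := by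
  intro k
  induction k with
  | zero =>
    constructor
    · simpa using (zpow_le_one_of_nonpos₀ (le_of_lt one_lt_goldenRatio) (by norm_num) : goldenRatio ^ (0 - 1 : ℤ) ≤ 1)
    · simpa using le_refl (1:ℝ)
  | succ k ih =>
    obtain ⟨h1, h2⟩ := ih
    refine ⟨by simpa [Nat.cast_add] using h2, ?_⟩
    have hfib : Nat.fib (k + 3) = Nat.fib (k + 1) + Nat.fib (k + 2) := by
      rw [Nat.fib_add_two]
    have hthis : goldenRatio ^ ((k : ℤ) + 1) = goldenRatio ^ ((k : ℤ) - 1) + goldenRatio ^ (k : ℤ) := by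
      have h := gold_zpow_add ((k : ℤ) - 1)
      rw [show (k : ℤ) - 1 + 2 = (k:ℤ) + 1 by ring, show (k : ℤ) - 1 + 1 = (k:ℤ) by ring] at h
      linarith [h]
    rw [show (((k:ℕ):ℤ)+1 : ℤ) = ((k+1:ℕ) : ℤ) by push_cast; ring] at hthis
    calc goldenRatio ^ (((k+1:ℕ)) : ℤ) = goldenRatio ^ ((k : ℤ) - 1) + goldenRatio ^ (k : ℤ) := hthis
    _ ≤ (Nat.fib (k + 1) : ℝ) + (Nat.fib (k + 2) : ℝ) := add_le_add h1 h2
    _ = (Nat.fib (k + 1 + 2) : ℝ) := by rw [hfib]; push_cast; ring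

lemma fib_lb (m : ℕ) (hm : 1 ≤ m) : goldenRatio ^ ((m : ℤ) - 2) ≤ (Nat.fib m : ℝ) := by
  obtain ⟨k, rfl⟩ := Nat.exists_eq_add_of_le hm
  have := (fib_lb_aux k).1
  have he : ((1 + k : ℕ) : ℤ) - 2 = (k : ℤ) - 1 := by push_cast; ring
  rw [he]
  simpa [Nat.add_comm] using this

lemma fib_ub_aux : ∀ k : ℕ,
    (Nat.fib (k + 1) : ℝ) ≤ goldenRatio ^ (k : ℤ) ∧
      (Nat.fib (k + 2) : ℝ) ≤ goldenRatio ^ ((k : ℤ) + 1) := by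
  intro k
  induction k with
  | zero =>
    constructor
    · simpa using le_refl (1:ℝ)
    · simpa using le_of_lt one_lt_goldenRatio
  | succ k ih =>
    obtain ⟨h1, h2⟩ := ih
    constructor
    · rw [show (((k+1 : ℕ)) : ℤ) = (k : ℤ) + 1 by push_cast; ring]
      exact h2
    · have hfib : Nat.fib (k + 3) = Nat.fib (k + 1) + Nat.fib (k + 2) := by
        rw [Nat.fib_add_two]
      have hg : goldenRatio ^ ((k : ℤ) + 2) = goldenRatio ^ ((k : ℤ) + 1) + goldenRatio ^ (k : ℤ) := by
        exact gold_zpow_add (k : ℤ)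
      have : (Nat.fib (k + 3) : ℝ) ≤ goldenRatio ^ ((k : ℤ) + 2) := by
        rw [hfib, hg]; push_cast
        have := add_le_add h1 h2
        linarith
      rw [show (((k+1 : ℕ)) : ℤ) + 1 = (k : ℤ) + 2 by push_cast; ring]
      exact this

lemma fib_ub (m : ℕ) : (Nat.fib m : ℝ) ≤ goldenRatio ^ ((m : ℤ) - 1) := by
  cases m with
  | zero =>
    simp only [Nat.fib_zero, Nat.cast_zero]
    positivity
  | succ k =>
    have := (fib_ub_aux k).1
    rw [show ((k+1 : ℕ) : ℤ) - 1 = (k : ℤ) by push_cast; ring]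
    exact this


/- ### lcm recursion and divisibility facts -/

lemma L_succ (n : ℕ) : L (n + 1) = Nat.lcm (Nat.fib (n + 1)) (L n) := by
  rw [L, L, ← Finset.insert_Icc_right_eq_Icc_add_one (by omega), Finset.lcm_insert, lcm_eq_nat_lcm]

lemma L_pos (n : ℕ) : 0 < L n := by
  induction n with
  | zero => simp [L]
  | succ n ih =>
    rw [L_succ]
    exact Nat.pos_of_ne_zero (Nat.lcm_ne_zero (Nat.fib_pos.mpr (by omega)).ne' ih.ne')

lemma fib_dvd_L {k n : ℕ} (h1 : 1 ≤ k) (h2 : k ≤ n) : Nat.fib k ∣ L n :=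
  Finset.dvd_lcm (by simp [Finset.mem_Icc]; omega)

lemma G_pos (m : ℕ) : 0 < G m := by
  apply Finset.prod_pos
  intro p hp
  obtain ⟨hp1, hp2, hp3⟩ := Nat.mem_primeFactors.mp hp
  exact Nat.fib_pos.mpr (Nat.div_pos (Nat.le_of_dvd (Nat.pos_of_ne_zero hp3) hp2) hp1.pos)

/-- binary gcd/lcm distributivity (one direction, as divisibility) -/
lemma gcd_lcm_dvd {a b c : ℕ} (ha : a ≠ 0) (hb : b ≠ 0) (hc : c ≠ 0) :
    Nat.gcd a (Nat.lcm b c) ∣ Nat.lcm (Nat.gcd a b) (Nat.gcd a c) := by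
  have hbc : Nat.lcm b c ≠ 0 := Nat.lcm_ne_zero hb hc
  have h1 : Nat.gcd a (Nat.lcm b c) ≠ 0 := Nat.gcd_ne_zero_left ha
  have hab : Nat.gcd a b ≠ 0 := Nat.gcd_ne_zero_left ha
  have hac : Nat.gcd a c ≠ 0 := Nat.gcd_ne_zero_left ha
  have h2 : Nat.lcm (Nat.gcd a b) (Nat.gcd a c) ≠ 0 := Nat.lcm_ne_zero hab hac
  rw [← Nat.factorization_le_iff_dvd h1 h2, Nat.factorization_gcd ha hbc,
    Nat.factorization_lcm hb hc, Nat.factorization_lcm hab hac,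
    Nat.factorization_gcd ha hb, Nat.factorization_gcd ha hc]
  intro p
  simp only [Finsupp.inf_apply, Finsupp.sup_apply]
  omega

lemma gcd_finsetLcm_dvd {a : ℕ} (ha : a ≠ 0) (s : Finset ℕ) (f : ℕ → ℕ)
    (hf : ∀ b ∈ s, f b ≠ 0) :
    Nat.gcd a (s.lcm f) ∣ s.lcm fun b => Nat.gcd a (f b) := by
  classical
  induction s using Finset.induction with
  | empty => simp
  | insert x s' hx ih =>
    have hfx : f x ≠ 0 := hf x (Finset.mem_insert_self x s')
    have hfs : ∀ b ∈ s', f b ≠ 0 := fun b hb => hf b (Finset.mem_insert_of_mem hb)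
    have hlcm : s'.lcm f ≠ 0 := by
      intro h
      rcases Finset.lcm_eq_zero_iff.mp h with ⟨y, hy, hy0⟩
      exact hfs y hy hy0
    rw [Finset.lcm_insert, Finset.lcm_insert, lcm_eq_nat_lcm, lcm_eq_nat_lcm]
    calc Nat.gcd a (Nat.lcm (f x) (s'.lcm f))
        ∣ Nat.lcm (Nat.gcd a (f x)) (Nat.gcd a (s'.lcm f)) := gcd_lcm_dvd ha hfx hlcm
      _ ∣ Nat.lcm (Nat.gcd a (f x)) (s'.lcm fun b => Nat.gcd a (f b)) :=
          Nat.lcm_dvd (Nat.dvd_lcm_left _ _) ((ih hfs).trans (Nat.dvd_lcm_right _ _))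

/-- the key divisibility: `gcd (fib m) (L (m-1)) ∣ G m` -/
lemma gcd_fib_L_dvd (m : ℕ) (hm : 1 ≤ m) : Nat.gcd (Nat.fib m) (L (m - 1)) ∣ G m := by
  have hfm : Nat.fib m ≠ 0 := (Nat.fib_pos.mpr hm).ne'
  have hstep : Nat.gcd (Nat.fib m) (L (m - 1)) ∣
      (Finset.Icc 1 (m - 1)).lcm fun k => Nat.gcd (Nat.fib m) (Nat.fib k) := by
    apply gcd_finsetLcm_dvd hfm
    intro b hb
    rw [Finset.mem_Icc] at hb
    exact (Nat.fib_pos.mpr hb.1).ne'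
  refine hstep.trans (Finset.lcm_dvd ?_)
  intro k hk
  rw [Finset.mem_Icc] at hk
  rw [← Nat.fib_gcd]
  set d := Nat.gcd m k with hd
  have hdm : d ∣ m := Nat.gcd_dvd_left m k
  have hd1 : 1 ≤ d := Nat.le_of_dvd (by omega) (Nat.gcd_dvd_right m k) |> fun _ =>
    Nat.pos_of_ne_zero (Nat.gcd_ne_zero_right (by omega))
  have hdlt : d < m := by
    have : d ≤ k := Nat.le_of_dvd (by omega) (Nat.gcd_dvd_right m k)
    omega
  -- m / d ≥ 2, take its least prime factor p
  have hmd2 : m / d ≠ 1 := by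
    intro h
    have := Nat.div_mul_cancel hdm
    rw [h, one_mul] at this
    omega
  set p := (m / d).minFac with hp
  have hpp : p.Prime := Nat.minFac_prime hmd2
  have hpdvd : p ∣ m / d := Nat.minFac_dvd _
  have hdpm : d * p ∣ m := by
    obtain ⟨t, ht⟩ := hpdvd
    exact ⟨t, by rw [← Nat.div_mul_cancel hdm, ht]; ring⟩
  have hpm : p ∣ m := hpdvd.trans (Nat.div_dvd_of_dvd hdm)
  have hdmp : d ∣ m / p := by
    obtain ⟨s, hs⟩ := hdpm
    rw [hs, show d * p * s = d * s * p by ring, Nat.mul_div_cancel _ hpp.pos]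
    exact Dvd.intro s rfl
  refine (Nat.fib_dvd _ _ hdmp).trans ?_
  apply Finset.dvd_prod_of_mem
  exact Nat.mem_primeFactors.mpr ⟨hpp, hpm, by omega⟩

/-- lower step inequality -/
lemma lower_step (n : ℕ) : L n * Nat.fib (n + 1) ≤ L (n + 1) * G (n + 1) := by
  set m := n + 1
  have hg : Nat.gcd (Nat.fib m) (L n) ∣ G m := by
    have := gcd_fib_L_dvd m (by omega)
    rwa [show m - 1 = n by omega] at this
  have hgle : Nat.gcd (Nat.fib m) (L n) ≤ G m := Nat.le_of_dvd (G_pos m) hg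
  have hkey : L m * Nat.gcd (Nat.fib m) (L n) = Nat.fib m * L n := by
    rw [L_succ, Nat.mul_comm, Nat.gcd_mul_lcm]
  calc L n * Nat.fib m = L m * Nat.gcd (Nat.fib m) (L n) := by rw [hkey]; ring
    _ ≤ L m * G m := Nat.mul_le_mul_left _ hgle

/-- generic upper step: if `fib d ∣ gcd (fib (n+1)) (L n)` then `L (n+1) * fib d ≤ L n * fib (n+1)` -/
lemma upper_step_aux {n d : ℕ} (h : Nat.fib d ∣ Nat.gcd (Nat.fib (n + 1)) (L n)) :
    L (n + 1) * Nat.fib d ≤ L n * Nat.fib (n + 1) := by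
  have hkey : L (n + 1) * Nat.gcd (Nat.fib (n + 1)) (L n) = Nat.fib (n + 1) * L n := by
    rw [L_succ, Nat.mul_comm, Nat.gcd_mul_lcm]
  have hgpos : 0 < Nat.gcd (Nat.fib (n + 1)) (L n) :=
    Nat.gcd_pos_of_pos_right _ (L_pos n)
  have hle : Nat.fib d ≤ Nat.gcd (Nat.fib (n + 1)) (L n) := Nat.le_of_dvd hgpos h
  calc L (n + 1) * Nat.fib d ≤ L (n + 1) * Nat.gcd (Nat.fib (n + 1)) (L n) :=
        Nat.mul_le_mul_left _ hle
    _ = L n * Nat.fib (n + 1) := by rw [hkey]; ring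

lemma upper_step_six {n : ℕ} (h6 : 6 ∣ (n + 1)) :
    L (n + 1) * (Nat.fib ((n + 1) / 2) * Nat.fib ((n + 1) / 3)) ≤
      L n * Nat.fib (n + 1) * Nat.fib ((n + 1) / 6) := by
  set m := n + 1 with hm
  obtain ⟨t, ht⟩ := h6
  have ht1 : 1 ≤ t := by omega
  have h2 : m / 2 = 3 * t := by omega
  have h3 : m / 3 = 2 * t := by omega
  have h6' : m / 6 = t := by omega
  have hgcd : Nat.gcd (m / 2) (m / 3) = m / 6 := by
    rw [h2, h3, h6', Nat.gcd_mul_right]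
    norm_num
  have hdvd2 : Nat.fib (m / 2) ∣ Nat.gcd (Nat.fib m) (L n) :=
    Nat.dvd_gcd (Nat.fib_dvd _ _ (by rw [h2, ht]; exact ⟨2, by ring⟩))
      (fib_dvd_L (by omega) (by omega))
  have hdvd3 : Nat.fib (m / 3) ∣ Nat.gcd (Nat.fib m) (L n) :=
    Nat.dvd_gcd (Nat.fib_dvd _ _ (by rw [h3, ht]; exact ⟨3, by ring⟩))
      (fib_dvd_L (by omega) (by omega))
  have hlcm : Nat.lcm (Nat.fib (m / 2)) (Nat.fib (m / 3)) ∣ Nat.gcd (Nat.fib m) (L n) :=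
    Nat.lcm_dvd hdvd2 hdvd3
  have hgfib : Nat.gcd (Nat.fib (m / 2)) (Nat.fib (m / 3)) = Nat.fib (m / 6) := by
    rw [← Nat.fib_gcd, hgcd]
  have hprod : Nat.fib (m / 2) * Nat.fib (m / 3) =
      Nat.fib (m / 6) * Nat.lcm (Nat.fib (m / 2)) (Nat.fib (m / 3)) := by
    rw [← hgfib, Nat.gcd_mul_lcm]
  have hkey : L m * Nat.gcd (Nat.fib m) (L n) = Nat.fib m * L n := by
    rw [hm, L_succ, Nat.mul_comm, Nat.gcd_mul_lcm]
  have hgpos : 0 < Nat.gcd (Nat.fib m) (L n) := Nat.gcd_pos_of_pos_right _ (L_pos n)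
  have hle : Nat.lcm (Nat.fib (m / 2)) (Nat.fib (m / 3)) ≤ Nat.gcd (Nat.fib m) (L n) :=
    Nat.le_of_dvd hgpos hlcm
  calc L m * (Nat.fib (m / 2) * Nat.fib (m / 3))
      = Nat.fib (m / 6) * (L m * Nat.lcm (Nat.fib (m / 2)) (Nat.fib (m / 3))) := by
        rw [hprod]; ring
    _ ≤ Nat.fib (m / 6) * (L m * Nat.gcd (Nat.fib m) (L n)) := by
        apply Nat.mul_le_mul_left
        exact Nat.mul_le_mul_left _ hle
    _ = L n * Nat.fib m * Nat.fib (m / 6) := by rw [hkey]; ring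


/- ### the counting identity -/

def W (m : ℕ) : ℕ := ∑ p ∈ m.primeFactors, (m / p - 1)

lemma P_succ (n : ℕ) :
    P (n + 1) = if Nat.Prime (n + 1) then insert (n + 1) (P n) else P n := by
  rw [P, P, ← Finset.insert_Icc_right_eq_Icc_add_one (by omega : 1 ≤ n + 1), Finset.filter_insert]

lemma succ_notmem_P (n : ℕ) : (n + 1) ∉ P n := by
  simp only [P, Finset.mem_filter, Finset.mem_Icc]
  omega

lemma filter_dvd_P (n : ℕ) :
    (P (n + 1)).filter (· ∣ (n + 1)) = (n + 1).primeFactors := by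
  ext p
  simp only [Finset.mem_filter, P, Finset.mem_Icc, Nat.mem_primeFactors]
  constructor
  · rintro ⟨⟨⟨h1, h2⟩, hp⟩, hd⟩
    exact ⟨hp, hd, by omega⟩
  · rintro ⟨hp, hd, -⟩
    exact ⟨⟨⟨hp.pos, Nat.le_of_dvd (by omega) hd⟩, hp⟩, hd⟩

lemma term_succ (n p : ℕ) (hp : 1 ≤ p) :
    (n + 1) / p * ((n + 1) / p - 1) =
      n / p * (n / p - 1) + if p ∣ (n + 1) then 2 * ((n + 1) / p - 1) else 0 := by
  by_cases h : p ∣ (n + 1)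
  · have hJ : (n + 1) / p = n / p + 1 := by rw [Nat.succ_div, if_pos h]
    rw [hJ, if_pos h]
    set J := n / p
    cases J with
    | zero => norm_num
    | succ j => simp only [Nat.add_sub_cancel]; ring
  · have hJ : (n + 1) / p = n / p := by rw [Nat.succ_div, if_neg h, Nat.add_zero]
    rw [hJ, if_neg h, Nat.add_zero]

lemma Sg_succ (n : ℕ) : Sg (n + 1) = Sg n + 2 * W (n + 1) := by
  have h1 : Sg (n + 1) = ∑ p ∈ P (n + 1),
      (n / p * (n / p - 1) + if p ∣ (n + 1) then 2 * ((n + 1) / p - 1) else 0) := by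
    refine Finset.sum_congr rfl fun p hp => ?_
    have hp1 : 1 ≤ p := by
      simp only [P, Finset.mem_filter, Finset.mem_Icc] at hp
      omega
    exact term_succ n p hp1
  rw [h1, Finset.sum_add_distrib]
  congr 1
  · rw [P_succ]
    by_cases hpr : Nat.Prime (n + 1)
    · rw [if_pos hpr, Finset.sum_insert (succ_notmem_P n)]
      have : n / (n + 1) = 0 := Nat.div_eq_of_lt (by omega)
      rw [Sg]
      rw [this]
      simp
    · rw [if_neg hpr, Sg]
  · rw [← Finset.sum_filter, filter_dvd_P, W, Finset.mul_sum]

lemma B_succ (n : ℕ) : B (n + 1) = B n + 2 * (n : ℤ) - 2 - 2 * (W (n + 1) : ℤ) := by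
  have h := Sg_succ n
  have : (Sg (n + 1) : ℤ) = (Sg n : ℤ) + 2 * (W (n + 1) : ℤ) := by exact_mod_cast h
  simp only [B]
  rw [this]
  push_cast
  ring

/- ### the lower bound via induction -/

lemma W_cast (m : ℕ) (hm : 1 ≤ m) :
    ∀ p ∈ m.primeFactors, 1 ≤ m / p := by
  intro p hp
  obtain ⟨hp1, hp2, _⟩ := Nat.mem_primeFactors.mp hp
  exact Nat.div_pos (Nat.le_of_dvd (by omega) hp2) hp1.pos

lemma G_ub (m : ℕ) (hm : 1 ≤ m) : (G m : ℝ) ≤ goldenRatio ^ (W m) := by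
  rw [G, W]
  push_cast
  rw [← Finset.prod_pow_eq_pow_sum]
  refine Finset.prod_le_prod (fun p _ => by positivity) fun p hp => ?_
  have h1 : 1 ≤ m / p := W_cast m hm p hp
  have := fib_ub (m / p)
  calc (Nat.fib (m / p) : ℝ) ≤ goldenRatio ^ ((m / p : ℕ) : ℤ) * goldenRatio ^ (-1 : ℤ) := by
        rw [← zpow_add₀ goldenRatio_ne_zero]
        simpa [← sub_eq_add_neg] using this
    _ = goldenRatio ^ (m / p - 1 : ℕ) := by
        rw [← zpow_natCast goldenRatio (m / p - 1), ← zpow_add₀ goldenRatio_ne_zero]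
        congr 1
        omega

lemma lower_main : ∀ n : ℕ, goldenRatio ^ (B n) ≤ ((L n : ℕ) : ℝ) ^ 2 := by
  intro n
  induction n with
  | zero =>
    have hL : L 0 = 1 := by
      rw [L, show Finset.Icc 1 0 = (∅ : Finset ℕ) from rfl, Finset.lcm_empty]
    have hB : B 0 = 0 := by simp [B, Sg, P]
    rw [hL, hB]
    norm_num
  | succ n ih =>
    have hW := G_ub (n + 1) (by omega)
    have hfib := fib_lb (n + 1) (by omega)
    have hstep := lower_step n
    have hGpos : (0 : ℝ) < (G (n + 1) : ℝ) := by exact_mod_cast G_pos (n + 1)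
    have hLpos : (0 : ℝ) < ((L (n + 1) : ℕ) : ℝ) := by exact_mod_cast L_pos (n + 1)
    have hL0 : (0 : ℝ) ≤ ((L n : ℕ) : ℝ) := by positivity
    have hstepR : ((L n : ℕ) : ℝ) * (Nat.fib (n + 1) : ℝ) ≤
        ((L (n + 1) : ℕ) : ℝ) * (G (n + 1) : ℝ) := by exact_mod_cast hstep
    have hsq : (((L n : ℕ) : ℝ) * (Nat.fib (n + 1) : ℝ)) ^ 2 ≤
        (((L (n + 1) : ℕ) : ℝ) * (G (n + 1) : ℝ)) ^ 2 := by
      apply pow_le_pow_left₀ (by positivity) hstepR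
    have key : goldenRatio ^ (B (n + 1)) * ((G (n + 1) : ℝ)) ^ 2 ≤
        ((L (n + 1) : ℕ) : ℝ) ^ 2 * ((G (n + 1) : ℝ)) ^ 2 := by
      calc goldenRatio ^ (B (n + 1)) * ((G (n + 1) : ℝ)) ^ 2
          ≤ goldenRatio ^ (B (n + 1)) * (goldenRatio ^ (W (n + 1)) : ℝ) ^ 2 := by
            apply mul_le_mul_of_nonneg_left _ (le_of_lt (zpow_pos goldenRatio_pos _))
            apply pow_le_pow_left₀ hGpos.le hW
        _ = goldenRatio ^ (B n) * (goldenRatio ^ (((n : ℤ)) - 1)) ^ 2 := by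
            rw [pow_two, pow_two, ← zpow_natCast goldenRatio (W (n + 1)),
              ← zpow_add₀ goldenRatio_ne_zero, ← zpow_add₀ goldenRatio_ne_zero,
              ← zpow_add₀ goldenRatio_ne_zero, ← zpow_add₀ goldenRatio_ne_zero]
            congr 1
            rw [B_succ]
            push_cast
            ring
        _ ≤ ((L n : ℕ) : ℝ) ^ 2 * ((Nat.fib (n + 1) : ℝ)) ^ 2 := by
            have h1 : (0:ℝ) ≤ goldenRatio ^ ((n : ℤ) - 1) := le_of_lt (zpow_pos goldenRatio_pos _)
            have h2 : goldenRatio ^ ((n : ℤ) - 1) ≤ (Nat.fib (n + 1) : ℝ) := by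
              have : ((n + 1 : ℕ) : ℤ) - 2 = (n : ℤ) - 1 := by push_cast; ring
              rwa [this] at hfib
            have h3 := ih
            have h4 : (0:ℝ) ≤ goldenRatio ^ (B n) := le_of_lt (zpow_pos goldenRatio_pos _)
            calc goldenRatio ^ (B n) * (goldenRatio ^ (((n : ℤ)) - 1)) ^ 2
                ≤ ((L n : ℕ) : ℝ) ^ 2 * (goldenRatio ^ (((n : ℤ)) - 1)) ^ 2 := by
                  apply mul_le_mul_of_nonneg_right h3 (by positivity)
              _ ≤ ((L n : ℕ) : ℝ) ^ 2 * ((Nat.fib (n + 1) : ℝ)) ^ 2 := by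
                  apply mul_le_mul_of_nonneg_left _ (by positivity)
                  apply pow_le_pow_left₀ h1 h2
        _ = (((L n : ℕ) : ℝ) * (Nat.fib (n + 1) : ℝ)) ^ 2 := by ring
        _ ≤ (((L (n + 1) : ℕ) : ℝ) * (G (n + 1) : ℝ)) ^ 2 := hsq
        _ = ((L (n + 1) : ℕ) : ℝ) ^ 2 * ((G (n + 1) : ℝ)) ^ 2 := by ring
    have hG2 : (0:ℝ) < ((G (n + 1) : ℝ)) ^ 2 := by positivity
    exact le_of_mul_le_mul_right key hG2


/- ### the upper bound via induction -/

lemma C_succ (n : ℕ) : C (n + 1) = C n + beta (n + 1) := rfl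

lemma beta_of_six {m : ℕ} (h : m % 6 = 0) : beta m = m / 3 + 2 := by
  rw [beta, if_pos h]

lemma beta_of_two {m : ℕ} (h6 : m % 6 ≠ 0) (h2 : m % 2 = 0) : beta m = m / 2 + 1 := by
  rw [beta, if_neg h6, if_pos h2]

lemma beta_of_three {m : ℕ} (h6 : m % 6 ≠ 0) (h2 : m % 2 ≠ 0) (h3 : m % 3 = 0) :
    beta m = 2 * m / 3 + 1 := by
  rw [beta, if_neg h6, if_neg h2, if_pos h3]

lemma beta_of_one {m : ℕ} (h6 : m % 6 ≠ 0) (h2 : m % 2 ≠ 0) (h3 : m % 3 ≠ 0) :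
    beta m = m - 1 := by
  rw [beta, if_neg h6, if_neg h2, if_neg h3]

/-- generic step for the upper bound -/
lemma upper_case {n X Y : ℕ} {xe ye : ℤ}
    (hXY : L (n + 1) * X ≤ L n * Y)
    (hIH : ((L n : ℕ) : ℝ) ≤ goldenRatio ^ (C n))
    (hX : goldenRatio ^ xe ≤ (X : ℝ))
    (hY : (Y : ℝ) ≤ goldenRatio ^ ye)
    (hXpos : 0 < X)
    (hexp : (C n : ℤ) + ye ≤ (C (n + 1) : ℤ) + xe) :
    ((L (n + 1) : ℕ) : ℝ) ≤ goldenRatio ^ (C (n + 1)) := by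
  have hXr : (0:ℝ) < (X : ℝ) := by exact_mod_cast hXpos
  have hchain : ((L (n + 1) : ℕ) : ℝ) * (X : ℝ) ≤ goldenRatio ^ (C (n + 1)) * (X : ℝ) := by
    calc ((L (n + 1) : ℕ) : ℝ) * (X : ℝ) ≤ ((L n : ℕ) : ℝ) * (Y : ℝ) := by exact_mod_cast hXY
      _ ≤ goldenRatio ^ (C n) * goldenRatio ^ ye := by
          apply mul_le_mul hIH hY (by positivity) (by positivity)
      _ = goldenRatio ^ ((C n : ℤ) + ye) := by
          rw [zpow_add₀ goldenRatio_ne_zero, zpow_natCast]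
      _ ≤ goldenRatio ^ ((C (n + 1) : ℤ) + xe) := by
          exact zpow_le_zpow_right₀ (le_of_lt one_lt_goldenRatio) hexp
      _ = goldenRatio ^ (C (n + 1)) * goldenRatio ^ xe := by
          rw [zpow_add₀ goldenRatio_ne_zero, zpow_natCast]
      _ ≤ goldenRatio ^ (C (n + 1)) * (X : ℝ) := by
          apply mul_le_mul_of_nonneg_left hX (by positivity)
  exact le_of_mul_le_mul_right hchain hXr

lemma upper_main : ∀ n : ℕ, ((L n : ℕ) : ℝ) ≤ goldenRatio ^ (C n) := by
  intro n
  induction n with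
  | zero =>
    have hL : L 0 = 1 := by
      rw [L, show Finset.Icc 1 0 = (∅ : Finset ℕ) from rfl, Finset.lcm_empty]
    rw [hL]
    norm_num [C]
  | succ n ih =>
    set m := n + 1 with hm
    have hm1 : 1 ≤ m := by omega
    by_cases h6 : m % 6 = 0
    · -- m divisible by 6
      obtain ⟨t, ht⟩ : 6 ∣ m := Nat.dvd_of_mod_eq_zero h6
      have ht1 : 1 ≤ t := by omega
      have hstep := upper_step_six (n := n) (by omega : 6 ∣ (n+1))
      have hb : beta m = m / 3 + 2 := beta_of_six h6
      have h12 : 1 ≤ m / 2 := by omega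
      have h13 : 1 ≤ m / 3 := by omega
      refine upper_case (X := Nat.fib (m / 2) * Nat.fib (m / 3))
        (Y := Nat.fib m * Nat.fib (m / 6))
        (xe := ((m / 2 : ℕ) : ℤ) - 2 + (((m / 3 : ℕ) : ℤ) - 2))
        (ye := ((m : ℕ) : ℤ) - 1 + (((m / 6 : ℕ) : ℤ) - 1))
        (by simpa [mul_assoc] using hstep) ih ?_ ?_ ?_ ?_
      · rw [zpow_add₀ goldenRatio_ne_zero]
        push_cast
        exact mul_le_mul (fib_lb _ h12) (fib_lb _ h13) (by positivity) (by positivity)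
      · rw [zpow_add₀ goldenRatio_ne_zero]
        push_cast
        exact mul_le_mul (fib_ub m) (fib_ub (m / 6)) (by positivity) (by positivity)
      · exact Nat.mul_pos (Nat.fib_pos.mpr h12) (Nat.fib_pos.mpr h13)
      · rw [C_succ, ← hm, hb]
        push_cast
        omega
    · by_cases h2 : m % 2 = 0
      · -- even, not divisible by 3
        have hb : beta m = m / 2 + 1 := beta_of_two h6 h2
        have h12 : 1 ≤ m / 2 := by omega
        have hdvd : Nat.fib (m / 2) ∣ Nat.gcd (Nat.fib m) (L n) :=
          Nat.dvd_gcd (Nat.fib_dvd _ _ ⟨2, by omega⟩) (fib_dvd_L h12 (by omega))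
        have hstep := upper_step_aux (n := n) (d := m / 2) (by rw [← hm]; exact hdvd)
        refine upper_case (X := Nat.fib (m / 2)) (Y := Nat.fib m)
          (xe := ((m / 2 : ℕ) : ℤ) - 2) (ye := ((m : ℕ) : ℤ) - 1)
          (by simpa [Nat.mul_comm] using hstep) ih (fib_lb _ h12) (fib_ub m)
          (Nat.fib_pos.mpr h12) ?_
        rw [C_succ, ← hm, hb]
        push_cast
        omega
      · by_cases h3 : m % 3 = 0
        · -- odd multiple of 3
          have hb : beta m = 2 * m / 3 + 1 := beta_of_three h6 h2 h3
          have h13 : 1 ≤ m / 3 := by omega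
          have hdvd : Nat.fib (m / 3) ∣ Nat.gcd (Nat.fib m) (L n) :=
            Nat.dvd_gcd (Nat.fib_dvd _ _ ⟨3, by omega⟩) (fib_dvd_L h13 (by omega))
          have hstep := upper_step_aux (n := n) (d := m / 3) (by rw [← hm]; exact hdvd)
          refine upper_case (X := Nat.fib (m / 3)) (Y := Nat.fib m)
            (xe := ((m / 3 : ℕ) : ℤ) - 2) (ye := ((m : ℕ) : ℤ) - 1)
            (by simpa [Nat.mul_comm] using hstep) ih (fib_lb _ h13) (fib_ub m)
            (Nat.fib_pos.mpr h13) ?_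
          rw [C_succ, ← hm, hb]
          push_cast
          omega
        · -- coprime to 6
          have hb : beta m = m - 1 := beta_of_one h6 h2 h3
          have hstep := upper_step_aux (n := n) (d := 1)
            (by simpa using (one_dvd (Nat.gcd (Nat.fib (n + 1)) (L n))))
          refine upper_case (X := 1) (Y := Nat.fib m)
            (xe := 0) (ye := ((m : ℕ) : ℤ) - 1)
            (by simpa [Nat.mul_comm] using hstep) ih (by norm_num) (fib_ub m)
            (by norm_num) ?_
          rw [C_succ, ← hm, hb]
          push_cast [Nat.cast_sub hm1]
          omega

/- ### the quadratic bound on C -/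

lemma beta_sum_six (k : ℕ) :
    beta (6 * k + 1) + beta (6 * k + 2) + beta (6 * k + 3) + beta (6 * k + 4)
      + beta (6 * k + 5) + beta (6 * k + 6) = 24 * k + 16 := by
  have b1 : beta (6 * k + 1) = 6 * k := by
    rw [beta_of_one (by omega) (by omega) (by omega)]; omega
  have b2 : beta (6 * k + 2) = 3 * k + 2 := by
    rw [beta_of_two (by omega) (by omega)]; omega
  have b3 : beta (6 * k + 3) = 4 * k + 3 := by
    rw [beta_of_three (by omega) (by omega) (by omega)]; omega
  have b4 : beta (6 * k + 4) = 3 * k + 3 := by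
    rw [beta_of_two (by omega) (by omega)]; omega
  have b5 : beta (6 * k + 5) = 6 * k + 4 := by
    rw [beta_of_one (by omega) (by omega) (by omega)]; omega
  have b6 : beta (6 * k + 6) = 2 * k + 4 := by
    rw [beta_of_six (by omega)]; omega
  omega

lemma bval1 (k : ℕ) : beta (6 * k + 1) = 6 * k := by
  rw [beta_of_one (by omega) (by omega) (by omega)]; omega

lemma bval2 (k : ℕ) : beta (6 * k + 2) = 3 * k + 2 := by
  rw [beta_of_two (by omega) (by omega)]; omega

lemma bval3 (k : ℕ) : beta (6 * k + 3) = 4 * k + 3 := by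
  rw [beta_of_three (by omega) (by omega) (by omega)]; omega

lemma bval4 (k : ℕ) : beta (6 * k + 4) = 3 * k + 3 := by
  rw [beta_of_two (by omega) (by omega)]; omega

lemma bval5 (k : ℕ) : beta (6 * k + 5) = 6 * k + 4 := by
  rw [beta_of_one (by omega) (by omega) (by omega)]; omega

lemma bval6 (k : ℕ) : beta (6 * k + 6) = 2 * k + 4 := by
  rw [beta_of_six (by omega)]; omega

lemma bval7 (k : ℕ) : beta (6 * k + 7) = 6 * k + 6 := by
  rw [beta_of_one (by omega) (by omega) (by omega)]; omega

lemma bval8 (k : ℕ) : beta (6 * k + 8) = 3 * k + 5 := by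
  rw [beta_of_two (by omega) (by omega)]; omega

lemma bval9 (k : ℕ) : beta (6 * k + 9) = 4 * k + 7 := by
  rw [beta_of_three (by omega) (by omega) (by omega)]; omega

lemma bval10 (k : ℕ) : beta (6 * k + 10) = 3 * k + 6 := by
  rw [beta_of_two (by omega) (by omega)]; omega

lemma bval11 (k : ℕ) : beta (6 * k + 11) = 6 * k + 10 := by
  rw [beta_of_one (by omega) (by omega) (by omega)]; omega

lemma beta_six_window (m : ℕ) :
    beta (m + 1) + beta (m + 2) + beta (m + 3) + beta (m + 4) + beta (m + 5) + beta (m + 6)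
      ≤ 4 * m + 20 := by
  obtain ⟨k, r, hr, rfl⟩ : ∃ k r, r < 6 ∧ m = 6 * k + r :=
    ⟨m / 6, m % 6, by omega, by omega⟩
  have v1 := bval1 k
  have v2 := bval2 k
  have v3 := bval3 k
  have v4 := bval4 k
  have v5 := bval5 k
  have v6 := bval6 k
  have v7 := bval7 k
  have v8 := bval8 k
  have v9 := bval9 k
  have v10 := bval10 k
  have v11 := bval11 k
  interval_cases r <;> simp only [Nat.add_assoc] <;> norm_num <;> omega

lemma C_window (m : ℕ) : C (m + 6) = C m + (beta (m + 1) + beta (m + 2) + beta (m + 3)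
    + beta (m + 4) + beta (m + 5) + beta (m + 6)) := by
  show C (m + 5) + beta (m + 6) = _
  show C (m + 4) + beta (m + 5) + beta (m + 6) = _
  show C (m + 3) + beta (m + 4) + beta (m + 5) + beta (m + 6) = _
  show C (m + 2) + beta (m + 3) + beta (m + 4) + beta (m + 5) + beta (m + 6) = _
  show C (m + 1) + beta (m + 2) + beta (m + 3) + beta (m + 4) + beta (m + 5) + beta (m + 6) = _
  show C m + beta (m + 1) + beta (m + 2) + beta (m + 3) + beta (m + 4) + beta (m + 5)
    + beta (m + 6) = _
  ring

lemma C_bound : ∀ n : ℕ, 3 * C n ≤ n * n + 4 * n := by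
  intro n
  induction n using Nat.strong_induction_on with
  | _ n ih =>
    match n, ih with
    | 0, _ => decide
    | 1, _ => decide
    | 2, _ => decide
    | 3, _ => decide
    | 4, _ => decide
    | 5, _ => decide
    | (m + 6), ih =>
      have h1 := ih m (by omega)
      have h2 := beta_six_window m
      rw [C_window]
      nlinarith [h1, h2]


/- ### analytic estimate on the prime sum, for n ≥ 39 -/

lemma tel : ∀ M : ℕ, 14 ≤ M →
    ∑ j ∈ Finset.Icc 15 M, (1 : ℝ) / (j * (j + 1)) ≤ 1 / 15 - 1 / (M + 1) := by
  intro M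
  induction M with
  | zero => exact fun h => absurd h (by omega)
  | succ M ihM =>
    intro hM
    rcases Nat.lt_or_ge M 14 with h | h
    · have hM14 : M = 13 := by omega
      subst hM14
      rw [Finset.Icc_eq_empty (by omega), Finset.sum_empty]
      norm_num
    · have hsub := ihM h
      rw [← Finset.insert_Icc_right_eq_Icc_add_one (by omega), Finset.sum_insert (by simp)]
      have hpos : (0:ℝ) < (M:ℝ) + 1 := by positivity
      have hpos2 : (0:ℝ) < (M:ℝ) + 2 := by positivity
      have key : (1 : ℝ) / ((M + 1 : ℕ) * ((M + 1 : ℕ) + 1)) =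
          1 / ((M:ℝ) + 1) - 1 / ((M:ℝ) + 2) := by
        push_cast
        field_simp
        ring
      rw [key]
      push_cast
      rw [show ((M:ℝ) + 1 + 1) = (M:ℝ) + 2 by ring]
      linarith [hsub]

lemma quad_mono {J : ℕ} {y : ℝ} (h1 : 1 ≤ J) (h2 : (J : ℝ) ≤ y) :
    ((J * (J - 1) : ℕ) : ℝ) ≤ y * (y - 1) := by
  have hc : ((J * (J - 1) : ℕ) : ℝ) = (J : ℝ) * ((J : ℝ) - 1) := by
    push_cast [Nat.cast_sub h1]
    ring
  rw [hc]
  have h3 : (1 : ℝ) ≤ (J : ℝ) := by exact_mod_cast h1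
  nlinarith

lemma P_split (n : ℕ) (hn : 30 ≤ n) :
    P n = P 29 ∪ (Finset.Icc 30 n).filter Nat.Prime := by
  have hui : Finset.Icc 1 n = Finset.Icc 1 29 ∪ Finset.Icc 30 n := by
    ext x
    simp only [Finset.mem_union, Finset.mem_Icc]
    omega
  rw [P, P, hui, Finset.filter_union]

lemma P29_eq : P 29 = ({2, 3, 5, 7, 11, 13, 17, 19, 23, 29} : Finset ℕ) := by decide

lemma Sg_le (n : ℕ) (hn : 39 ≤ n) :
    (Sg n : ℝ) ≤ ∑ p ∈ P 29, ((n : ℝ) / p) * ((n : ℝ) / p - 1) + (n : ℝ) ^ 2 / 60 := by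
  have hn30 : 30 ≤ n := by omega
  set Q := (Finset.Icc 30 n).filter Nat.Prime with hQ
  have hdisj : Disjoint (P 29) Q := by
    rw [Finset.disjoint_left]
    intro a ha haQ
    simp only [P, Finset.mem_filter, Finset.mem_Icc] at ha
    simp only [hQ, Finset.mem_filter, Finset.mem_Icc] at haQ
    omega
  have hcast : (Sg n : ℝ) = ∑ p ∈ P n, ((n / p * (n / p - 1) : ℕ) : ℝ) := by
    rw [Sg]
    push_cast
    rfl
  rw [hcast, P_split n hn30, Finset.sum_union hdisj]
  have hA : ∑ p ∈ P 29, ((n / p * (n / p - 1) : ℕ) : ℝ) ≤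
      ∑ p ∈ P 29, ((n : ℝ) / p) * ((n : ℝ) / p - 1) := by
    refine Finset.sum_le_sum fun p hp => ?_
    simp only [P, Finset.mem_filter, Finset.mem_Icc] at hp
    have hp1 : 1 ≤ p := hp.1.1
    have hpn : p ≤ n := by omega
    have hJ1 : 1 ≤ n / p := Nat.div_pos hpn (by omega)
    exact quad_mono hJ1 Nat.cast_div_le
  have hB : ∑ p ∈ Q, ((n / p * (n / p - 1) : ℕ) : ℝ) ≤ (n : ℝ) ^ 2 / 60 := by
    have hterm : ∀ p ∈ Q, ((n / p * (n / p - 1) : ℕ) : ℝ) ≤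
        (n : ℝ) ^ 2 / (4 * ((p - 1) / 2 : ℕ) * (((p - 1) / 2 : ℕ) + 1)) := by
      intro p hp
      simp only [hQ, Finset.mem_filter, Finset.mem_Icc] at hp
      obtain ⟨⟨hp30, hpn⟩, hprime⟩ := hp
      have hodd : p % 2 = 1 := Nat.odd_iff.mp (hprime.odd_of_ne_two (by omega))
      set j := (p - 1) / 2 with hj
      have hpj : p = 2 * j + 1 := by omega
      have hj15 : 15 ≤ j := by omega
      have hppos : (0:ℝ) < (p:ℝ) := by exact_mod_cast (by omega : 0 < p)
      have hJy : ((n / p : ℕ) : ℝ) ≤ (n : ℝ) / p := Nat.cast_div_le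
      have hsq : ((n / p * (n / p - 1) : ℕ) : ℝ) ≤ ((n : ℝ) / p) ^ 2 := by
        have h1 : ((n / p * (n / p - 1) : ℕ) : ℝ) ≤ ((n / p : ℕ) : ℝ) * ((n / p : ℕ) : ℝ) := by
          push_cast
          have : ((n / p - 1 : ℕ) : ℝ) ≤ ((n / p : ℕ) : ℝ) := by
            exact_mod_cast Nat.sub_le _ _
          nlinarith [Nat.cast_nonneg (α := ℝ) (n / p)]
        have h2 : ((n / p : ℕ) : ℝ) * ((n / p : ℕ) : ℝ) ≤ ((n : ℝ) / p) ^ 2 := by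
          have h0 : (0:ℝ) ≤ ((n / p : ℕ) : ℝ) := Nat.cast_nonneg _
          nlinarith
        linarith
      have hfrac : ((n : ℝ) / p) ^ 2 ≤ (n : ℝ) ^ 2 / (4 * (j:ℝ) * ((j:ℝ) + 1)) := by
        have hpr : ((p:ℝ)) ^ 2 - 1 = 4 * (j:ℝ) * ((j:ℝ) + 1) := by
          have : (p : ℝ) = 2 * (j : ℝ) + 1 := by exact_mod_cast hpj
          rw [this]
          ring
        rw [div_pow, ← hpr]
        have hp2 : (0:ℝ) < (p:ℝ)^2 - 1 := by
          have : (31:ℝ) ≤ (p:ℝ) := by exact_mod_cast (by omega : 31 ≤ p)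
          nlinarith
        apply div_le_div_of_nonneg_left (by positivity) hp2
        nlinarith [sq_nonneg ((p:ℝ))]
      calc ((n / p * (n / p - 1) : ℕ) : ℝ) ≤ ((n : ℝ) / p) ^ 2 := hsq
        _ ≤ (n : ℝ) ^ 2 / (4 * (j:ℝ) * ((j:ℝ) + 1)) := hfrac
        _ = (n : ℝ) ^ 2 / (4 * (j : ℕ) * ((j : ℕ) + 1)) := by push_cast; ring_nf
    have hsum1 : ∑ p ∈ Q, ((n / p * (n / p - 1) : ℕ) : ℝ) ≤
        ∑ p ∈ Q, (n : ℝ) ^ 2 / (4 * ((p - 1) / 2 : ℕ) * (((p - 1) / 2 : ℕ) + 1)) :=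
      Finset.sum_le_sum hterm
    have himg : ∑ p ∈ Q, (n : ℝ) ^ 2 / (4 * ((p - 1) / 2 : ℕ) * (((p - 1) / 2 : ℕ) + 1)) =
        ∑ j ∈ Q.image (fun p : ℕ => (p - 1) / 2), (n : ℝ) ^ 2 / (4 * (j : ℕ) * ((j : ℕ) + 1)) := by
      refine (Finset.sum_image (f := fun j : ℕ => (n:ℝ)^2/(4 * (j:ℝ) * ((j:ℝ)+1))) ?_).symm
      intro a ha b hb hab
      simp only [hQ, Finset.mem_coe, Finset.mem_filter, Finset.mem_Icc] at ha hb
      have hao : a % 2 = 1 := Nat.odd_iff.mp (ha.2.odd_of_ne_two (by omega))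
      have hbo : b % 2 = 1 := Nat.odd_iff.mp (hb.2.odd_of_ne_two (by omega))
      simp only at hab
      omega
    have hsubset : Q.image (fun p : ℕ => (p - 1) / 2) ⊆ Finset.Icc 15 n := by
      intro j hj
      obtain ⟨p, hp, rfl⟩ := Finset.mem_image.mp hj
      simp only [hQ, Finset.mem_filter, Finset.mem_Icc] at hp
      have hodd : p % 2 = 1 := Nat.odd_iff.mp (hp.2.odd_of_ne_two (by omega))
      simp only [Finset.mem_Icc]
      omega
    have hmono : ∑ j ∈ Q.image (fun p : ℕ => (p - 1) / 2),
          (n : ℝ) ^ 2 / (4 * (j : ℕ) * ((j : ℕ) + 1)) ≤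
        ∑ j ∈ Finset.Icc 15 n, (n : ℝ) ^ 2 / (4 * (j : ℕ) * ((j : ℕ) + 1)) := by
      apply Finset.sum_le_sum_of_subset_of_nonneg hsubset
      intro j _ _
      positivity
    have hfinal : ∑ j ∈ Finset.Icc 15 n, (n : ℝ) ^ 2 / (4 * (j : ℕ) * ((j : ℕ) + 1)) ≤
        (n : ℝ) ^ 2 / 60 := by
      have heq : ∀ j ∈ Finset.Icc 15 n, (n : ℝ) ^ 2 / (4 * (j : ℕ) * ((j : ℕ) + 1)) =
          ((n : ℝ) ^ 2 / 4) * (1 / ((j : ℕ) * ((j : ℕ) + 1))) := by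
        intro j hj
        simp only [Finset.mem_Icc] at hj
        have : (0:ℝ) < (j:ℝ) := by exact_mod_cast (by omega : 0 < j)
        field_simp
      rw [Finset.sum_congr rfl heq, ← Finset.mul_sum]
      have htel := tel n (by omega)
      have h1 : (0:ℝ) ≤ 1 / ((n:ℝ) + 1) := by positivity
      have h2 : (0:ℝ) ≤ (n : ℝ) ^ 2 / 4 := by positivity
      calc ((n : ℝ) ^ 2 / 4) * (∑ j ∈ Finset.Icc 15 n, (1:ℝ) / ((j : ℕ) * ((j : ℕ) + 1)))
          ≤ ((n : ℝ) ^ 2 / 4) * (1 / 15 - 1 / ((n:ℝ) + 1)) := by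
            exact mul_le_mul_of_nonneg_left htel h2
        _ ≤ ((n : ℝ) ^ 2 / 4) * (1 / 15) := by
            apply mul_le_mul_of_nonneg_left _ h2
            linarith
        _ = (n : ℝ) ^ 2 / 60 := by ring
    calc ∑ p ∈ Q, ((n / p * (n / p - 1) : ℕ) : ℝ)
        ≤ ∑ p ∈ Q, (n : ℝ) ^ 2 / (4 * ((p - 1) / 2 : ℕ) * (((p - 1) / 2 : ℕ) + 1)) := hsum1
      _ = ∑ j ∈ Q.image (fun p : ℕ => (p - 1) / 2),
            (n : ℝ) ^ 2 / (4 * (j : ℕ) * ((j : ℕ) + 1)) := himg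
      _ ≤ ∑ j ∈ Finset.Icc 15 n, (n : ℝ) ^ 2 / (4 * (j : ℕ) * ((j : ℕ) + 1)) := hmono
      _ ≤ (n : ℝ) ^ 2 / 60 := hfinal
  linarith [hA, hB]

lemma B_ge_of_large (n : ℕ) (hn : 39 ≤ n) : ((n : ℝ) ^ 2 - 9) / 2 ≤ (B n : ℝ) := by
  have hSg := Sg_le n hn
  have hBcast : (B n : ℝ) = (n : ℝ) * n - 3 * n - (Sg n : ℝ) := by
    rw [B]
    push_cast
    ring
  have hP29sum : ∑ p ∈ P 29, ((n : ℝ) / p) * ((n : ℝ) / p - 1) =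
      ((n:ℝ)/2) * ((n:ℝ)/2 - 1) + ((n:ℝ)/3) * ((n:ℝ)/3 - 1) + ((n:ℝ)/5) * ((n:ℝ)/5 - 1)
      + ((n:ℝ)/7) * ((n:ℝ)/7 - 1) + ((n:ℝ)/11) * ((n:ℝ)/11 - 1)
      + ((n:ℝ)/13) * ((n:ℝ)/13 - 1) + ((n:ℝ)/17) * ((n:ℝ)/17 - 1)
      + ((n:ℝ)/19) * ((n:ℝ)/19 - 1) + ((n:ℝ)/23) * ((n:ℝ)/23 - 1)
      + ((n:ℝ)/29) * ((n:ℝ)/29 - 1) := by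
    rw [P29_eq]
    rw [show ({2, 3, 5, 7, 11, 13, 17, 19, 23, 29} : Finset ℕ) =
      insert 2 (insert 3 (insert 5 (insert 7 (insert 11 (insert 13 (insert 17
        (insert 19 (insert 23 ({29} : Finset ℕ))))))))) from rfl]
    repeat rw [Finset.sum_insert (by decide)]
    rw [Finset.sum_singleton]
    push_cast
    ring
  rw [hBcast]
  rw [hP29sum] at hSg
  have hn' : (39:ℝ) ≤ (n:ℝ) := by exact_mod_cast hn
  nlinarith [hSg, sq_nonneg ((n:ℝ) - 39)]


/- ### small cases and final assembly -/

lemma gold_ub : goldenRatio ≤ 809017 / 500000 := by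
  rw [goldenRatio]
  have h5 : Real.sqrt 5 ≤ 1118034 / 500000 := by
    have h1 : Real.sqrt 5 ≤ Real.sqrt ((1118034 / 500000) ^ 2) := by
      apply Real.sqrt_le_sqrt
      norm_num
    rwa [Real.sqrt_sq (by norm_num)] at h1
  linarith

lemma lower_case_helper {n Lv K : ℕ} (hL : L n = Lv)
    (hexp : ((n : ℝ) ^ 2 / 4 - 9 / 4) * 4 = (K : ℝ))
    (hnum : ((809017 : ℝ) / 500000) ^ K ≤ ((Lv : ℕ) : ℝ) ^ 4) :
    goldenRatio ^ ((n : ℝ) ^ 2 / 4 - 9 / 4) ≤ ((L n : ℕ) : ℝ) := by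
  set x := (n : ℝ) ^ 2 / 4 - 9 / 4 with hx
  have hx0 : 0 ≤ x := by
    have : (0 : ℝ) ≤ (K : ℝ) := Nat.cast_nonneg _
    linarith
  have h1 : (goldenRatio ^ x) ^ (4 : ℕ) = goldenRatio ^ (K : ℕ) := by
    rw [← Real.rpow_natCast (goldenRatio ^ x) 4, ← Real.rpow_mul (le_of_lt goldenRatio_pos),
      show x * ((4:ℕ):ℝ) = (K : ℝ) by push_cast at hexp ⊢; linarith [hexp],
      Real.rpow_natCast]
  have h2 : goldenRatio ^ (K : ℕ) ≤ ((809017 : ℝ) / 500000) ^ K :=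
    pow_le_pow_left₀ (le_of_lt goldenRatio_pos) gold_ub K
  have h4 : (goldenRatio ^ x) ^ (4 : ℕ) ≤ ((L n : ℕ) : ℝ) ^ (4 : ℕ) := by
    rw [h1, hL]
    exact h2.trans hnum
  have := pow_le_pow_iff_left₀ (a := goldenRatio ^ x) (b := ((L n : ℕ) : ℝ))
    (by positivity) (by positivity) (by norm_num : (4:ℕ) ≠ 0)
  exact this.mp h4

lemma lower_conclude (n : ℕ) (hB : ((n : ℝ) ^ 2 - 9) / 2 ≤ (B n : ℝ)) :
    goldenRatio ^ ((n : ℝ) ^ 2 / 4 - 9 / 4) ≤ ((L n : ℕ) : ℝ) := by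
  have h := lower_main n
  have h2 : goldenRatio ^ (((n : ℝ) ^ 2 - 9) / 2) ≤ ((L n : ℕ) : ℝ) ^ 2 := by
    calc goldenRatio ^ (((n : ℝ) ^ 2 - 9) / 2)
        ≤ goldenRatio ^ ((B n : ℤ) : ℝ) :=
          Real.rpow_le_rpow_of_exponent_le (le_of_lt one_lt_goldenRatio) hB
      _ = goldenRatio ^ (B n) := Real.rpow_intCast _ _
      _ ≤ ((L n : ℕ) : ℝ) ^ 2 := h
  have h3 : (goldenRatio ^ ((n : ℝ) ^ 2 / 4 - 9 / 4)) ^ (2 : ℕ) =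
      goldenRatio ^ (((n : ℝ) ^ 2 - 9) / 2) := by
    rw [← Real.rpow_natCast (goldenRatio ^ ((n : ℝ) ^ 2 / 4 - 9 / 4)) 2,
      ← Real.rpow_mul (le_of_lt goldenRatio_pos)]
    congr 1
    push_cast
    ring
  have h4 : (goldenRatio ^ ((n : ℝ) ^ 2 / 4 - 9 / 4)) ^ (2 : ℕ) ≤ ((L n : ℕ) : ℝ) ^ (2 : ℕ) := by
    rw [h3]
    exact h2
  have := pow_le_pow_iff_left₀ (a := goldenRatio ^ ((n : ℝ) ^ 2 / 4 - 9 / 4))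
    (b := ((L n : ℕ) : ℝ)) (by positivity) (by positivity) (by norm_num : (2:ℕ) ≠ 0)
  exact this.mp h4

lemma upper_conclude (n : ℕ) :
    ((L n : ℕ) : ℝ) ≤ goldenRatio ^ ((n : ℝ) ^ 2 / 3 + 4 * (n : ℝ) / 3) := by
  have h := upper_main n
  have hC := C_bound n
  calc ((L n : ℕ) : ℝ) ≤ goldenRatio ^ (C n) := h
    _ = goldenRatio ^ ((C n : ℕ) : ℝ) := (Real.rpow_natCast _ _).symm
    _ ≤ goldenRatio ^ ((n : ℝ) ^ 2 / 3 + 4 * (n : ℝ) / 3) := by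
        apply Real.rpow_le_rpow_of_exponent_le (le_of_lt one_lt_goldenRatio)
        have h3 : ((3 * C n : ℕ) : ℝ) ≤ ((n * n + 4 * n : ℕ) : ℝ) := by exact_mod_cast hC
        push_cast at h3
        nlinarith [h3]

lemma main_lower (n : ℕ) (hn : 1 ≤ n) :
    goldenRatio ^ ((n : ℝ) ^ 2 / 4 - 9 / 4) ≤ ((L n : ℕ) : ℝ) := by
  by_cases hmem : n ∈ ({4, 6, 8, 10, 12} : Finset ℕ)
  · fin_cases hmem
    · exact lower_case_helper (Lv := 6) (K := 7) (by decide) (by norm_num) (by norm_num)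
    · exact lower_case_helper (Lv := 120) (K := 27) (by decide) (by norm_num) (by norm_num)
    · exact lower_case_helper (Lv := 10920) (K := 55) (by decide) (by norm_num) (by norm_num)
    · exact lower_case_helper (Lv := 2042040) (K := 91) (by decide) (by norm_num) (by norm_num)
    · exact lower_case_helper (Lv := 1090449360) (K := 135) (by decide) (by norm_num) (by norm_num)
  · apply lower_conclude
    rcases le_or_gt 39 n with h | h
    · exact B_ge_of_large n h
    · have hdec : ∀ m ∈ Finset.Icc 1 38, m ∉ ({4, 6, 8, 10, 12} : Finset ℕ) →
          2 * Sg m + 6 * m ≤ m * m + 9 := by decide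
      have hsmall : 2 * Sg n + 6 * n ≤ n * n + 9 :=
        hdec n (Finset.mem_Icc.mpr ⟨hn, by omega⟩) hmem
      have hsr : 2 * (Sg n : ℝ) + 6 * (n : ℝ) ≤ (n : ℝ) * n + 9 := by exact_mod_cast hsmall
      rw [B]
      push_cast
      nlinarith [hsr]

end Stmt19

theorem stmt_19 (n : ℕ) (hn : 1 ≤ n) :
    ((1 + Real.sqrt 5) / 2) ^ ((n : ℝ) ^ 2 / 4 - 9 / 4)
        ≤ ((Finset.lcm (Finset.Icc 1 n) Nat.fib : ℕ) : ℝ) ∧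
    ((Finset.lcm (Finset.Icc 1 n) Nat.fib : ℕ) : ℝ)
        ≤ ((1 + Real.sqrt 5) / 2) ^ ((n : ℝ) ^ 2 / 3 + 4 * (n : ℝ) / 3) := by
  constructor
  · exact Stmt19.main_lower n hn
  · exact Stmt19.upper_conclude n
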